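/- Let n, k be integers with k ≥ 1 and 2k ≤ n. Let ℳ be an intersecting family of k-element subsets of [2, n] = {2, …, n} (a set of size n−1), and let 𝒩 = {[2, n] \ M : M ∈ ℳ} be the family of complements (each member of 𝒩 has n−1−k elements). Then |𝒩| ≤ |∂_{k−1}(𝒩)|, where ∂_{k−1}(𝒩) is the (k−1)-shadow of 𝒩. -/

import Mathlib

open Finset
open scoped FinsetFamily

attribute [-instance] instDecidableEqFin

/-- The `m`-shadow of a family `𝒩`: all `m`-element sets contained in some member of `𝒩`. -/
def mShadow (m : ℕ) (𝒩 : Finset (Finset ℕ)) : Finset (Finset ℕ) :=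
  𝒩.sup (fun F => F.powersetCard m)

lemma mem_mShadow {m : ℕ} {𝒩 : Finset (Finset ℕ)} {B : Finset ℕ} :
    B ∈ mShadow m 𝒩 ↔ ∃ A ∈ 𝒩, B ⊆ A ∧ B.card = m := by
  simp [mShadow, Finset.mem_sup, Finset.mem_powersetCard]

/-- Initial segments of colex of every size exist. -/
lemma exists_isInitSeg (m r N : ℕ)
    (hN : N ≤ (Finset.powersetCard r (Finset.univ : Finset (Fin m))).card) :
    ∃ 𝒞 : Finset (Finset (Fin m)), Colex.IsInitSeg 𝒞 r ∧ 𝒞.card = N := by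
  classical
  have key : ∀ c : ℕ, ∀ 𝒞 : Finset (Finset (Fin m)), 𝒞.card = c → Colex.IsInitSeg 𝒞 r →
      ∀ N ≤ c, ∃ 𝒟 : Finset (Finset (Fin m)), Colex.IsInitSeg 𝒟 r ∧ 𝒟.card = N := by
    intro c
    induction c with
    | zero =>
      intro 𝒞 hc hseg N hN
      have : N = 0 := Nat.le_zero.1 hN
      exact ⟨∅, Colex.isInitSeg_empty, by simp [this]⟩
    | succ c ih =>
      intro 𝒞 hc hseg N hN
      rcases eq_or_lt_of_le hN with rfl | hNlt
      · exact ⟨𝒞, hseg, hc⟩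
      · have hne : 𝒞.Nonempty := by
          rw [← Finset.card_pos, hc]; omega
        obtain ⟨A, hA, hmax⟩ := Finset.exists_max_image 𝒞 toColex hne
        refine ih (𝒞.erase A) (by rw [Finset.card_erase_of_mem hA, hc]; rfl) ?_ N (by omega)
        constructor
        · intro t ht
          exact hseg.1 (Finset.mem_of_mem_erase ht)
        · rintro s t hs ⟨hlt, hcard⟩
          have hs' : s ∈ 𝒞 := Finset.mem_of_mem_erase hs
          have ht' : t ∈ 𝒞 := hseg.2 hs' ⟨hlt, hcard⟩
          refine Finset.mem_erase.2 ⟨?_, ht'⟩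
          intro h
          subst h
          exact absurd (hmax s hs') (not_le.2 hlt)
  refine key _ (Finset.powersetCard r (Finset.univ : Finset (Fin m))) rfl ?_ N hN
  constructor
  · intro t ht
    exact (Finset.mem_powersetCard.1 ht).2
  · rintro s t hs ⟨hlt, hcard⟩
    exact Finset.mem_powersetCard.2 ⟨Finset.subset_univ _, hcard⟩

lemma iterated_lym {m r : ℕ} (𝒟 : Finset (Finset (Fin m))) (h : (𝒟 : Set (Finset (Fin m))).Sized r) :
    ∀ j ≤ r, (𝒟.card : ℚ) / (m.choose r) ≤ ((∂^[j] 𝒟).card : ℚ) / (m.choose (r - j)) := by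
  intro j
  induction j with
  | zero => intro _; simp
  | succ j ih =>
    intro hj
    have hj' : j ≤ r := by omega
    refine (ih hj').trans ?_
    have hs : (((∂^[j] 𝒟) : Finset (Finset (Fin m))) : Set (Finset (Fin m))).Sized (r - j) :=
      h.shadow_iterate
    have hne : r - j ≠ 0 := by omega
    have H := Finset.card_div_choose_le_card_shadow_div_choose (𝕜 := ℚ) hne hs
    rw [Fintype.card_fin] at H
    rw [Function.iterate_succ_apply']
    have : r - j - 1 = r - (j + 1) := by omega
    rwa [this] at H

lemma card_le_iterated_shadow {m r i : ℕ} (𝒟 : Finset (Finset (Fin m)))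
    (h : (𝒟 : Set (Finset (Fin m))).Sized r) (hi : i ≤ r) (hr : r ≤ m)
    (hch : m.choose (r - i) = m.choose r) : 𝒟.card ≤ (∂^[i] 𝒟).card := by
  have H := iterated_lym 𝒟 h i hi
  rw [hch] at H
  have hpos : (0 : ℚ) < (m.choose r : ℚ) := by
    exact_mod_cast Nat.choose_pos hr
  have := (div_le_div_iff_of_pos_right hpos).1 H
  exact_mod_cast this

lemma isInitSeg_image_castSucc {c r : ℕ} {𝒟 : Finset (Finset (Fin c))}
    (h : Colex.IsInitSeg 𝒟 r) :
    Colex.IsInitSeg (𝒟.image (fun t => t.image Fin.castSucc)) r := by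
  classical
  constructor
  · intro t ht
    simp only [Finset.coe_image, Set.mem_image, Finset.mem_coe] at ht
    obtain ⟨t₀, ht₀, rfl⟩ := ht
    rw [Finset.card_image_of_injective _ (Fin.castSucc_injective c)]
    exact h.1 ht₀
  · rintro s t hs ⟨hlt, hcard⟩
    obtain ⟨s₀, hs₀, rfl⟩ := Finset.mem_image.1 hs
    have hlast : Fin.last c ∉ t := by
      intro hmem
      have hnotin : Fin.last c ∉ s₀.image Fin.castSucc := by
        simp only [Finset.mem_image]
        rintro ⟨y, -, hy⟩
        exact absurd hy (Fin.castSucc_lt_last y).ne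
      have : toColex (s₀.image Fin.castSucc) < toColex t := by
        rw [Colex.toColex_lt_toColex_iff_exists_forall_lt]
        exact ⟨Fin.last c, hmem, hnotin, fun b hb _ => by
          obtain ⟨y, -, rfl⟩ := Finset.mem_image.1 hb
          exact Fin.castSucc_lt_last y⟩
      exact lt_asymm hlt this
    have hsub : t ⊆ (Finset.univ : Finset (Fin c)).image Fin.castSucc := by
      intro x hx
      have hne : x ≠ Fin.last c := fun hh => hlast (hh ▸ hx)
      obtain ⟨y, rfl⟩ := Fin.eq_castSucc_of_ne_last hne
      exact Finset.mem_image_of_mem _ (Finset.mem_univ y)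
    obtain ⟨t₀, -, rfl⟩ := Finset.subset_image_iff.1 hsub
    have hlt₀ : toColex t₀ < toColex s₀ :=
      (Colex.toColex_image_lt_toColex_image Fin.strictMono_castSucc).1 hlt
    have hc₀ : t₀.card = r := by
      rwa [Finset.card_image_of_injective _ (Fin.castSucc_injective c)] at hcard
    exact Finset.mem_image_of_mem _ (h.2 hs₀ ⟨hlt₀, hc₀⟩)

lemma image_shadow_iterate_subset {c i : ℕ} (𝒟 : Finset (Finset (Fin c))) :
    (∂^[i] 𝒟).image (fun t => t.image Fin.castSucc) ⊆
      ∂^[i] (𝒟.image (fun t => t.image Fin.castSucc)) := by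
  classical
  intro B hB
  obtain ⟨B₀, hB₀, rfl⟩ := Finset.mem_image.1 hB
  rw [Finset.mem_shadow_iterate_iff_exists_sdiff] at hB₀ ⊢
  obtain ⟨A₀, hA₀, hsub, hcd⟩ := hB₀
  refine ⟨A₀.image Fin.castSucc, Finset.mem_image_of_mem _ hA₀,
    Finset.image_subset_image hsub, ?_⟩
  rw [← Finset.image_sdiff _ _ (Fin.castSucc_injective c),
    Finset.card_image_of_injective _ (Fin.castSucc_injective c)]
  exact hcd

theorem complements_shadow_bound (n k : ℕ) (hk : 1 ≤ k) (hkn : 2 * k ≤ n)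
    (ℳ : Finset (Finset ℕ)) (hℳ : ℳ ⊆ (Finset.Icc 2 n).powersetCard k)
    (hint : ∀ M ∈ ℳ, ∀ M' ∈ ℳ, (M ∩ M').Nonempty) :
    (ℳ.image (fun M => Finset.Icc 2 n \ M)).card ≤
      (mShadow (k - 1) (ℳ.image (fun M => Finset.Icc 2 n \ M))).card := by
  classical
  set X : Finset ℕ := Finset.Icc 2 n with hX
  set 𝒩 : Finset (Finset ℕ) := ℳ.image (fun M => X \ M) with h𝒩
  have hXcard : X.card = n - 1 := by rw [hX, Nat.card_Icc]; omega
  have hM : ∀ M ∈ ℳ, M ⊆ X ∧ M.card = k := fun M hMm => Finset.mem_powersetCard.1 (hℳ hMm)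
  have hNsub : ∀ N ∈ 𝒩, N ⊆ X ∧ N.card = n - 1 - k := by
    intro N hN
    obtain ⟨M, hMm, rfl⟩ := Finset.mem_image.1 hN
    refine ⟨Finset.sdiff_subset, ?_⟩
    rw [Finset.card_sdiff_of_subset (hM M hMm).1, hXcard, (hM M hMm).2]
  rcases eq_or_lt_of_le hkn with heq | hlt
  · -- trivial case n = 2k
    apply Finset.card_le_card
    intro N hN
    rw [mem_mShadow]
    exact ⟨N, hN, subset_rfl, by rw [(hNsub N hN).2]; omega⟩
  -- main case 2k < n
  set c : ℕ := n - 2 with hc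
  set f : ℕ → Fin (c + 1) := fun x => ⟨(x - 2) % (c + 1), Nat.mod_lt _ (Nat.succ_pos c)⟩ with hf
  have hfval : ∀ x ∈ X, (f x : ℕ) = x - 2 := by
    intro x hx
    rw [hX, Finset.mem_Icc] at hx
    simp only [hf]
    exact Nat.mod_eq_of_lt (by omega)
  have hinj : ∀ x ∈ X, ∀ y ∈ X, f x = f y → x = y := by
    intro x hx y hy hxy
    have hx' := hfval x hx
    have hy' := hfval y hy
    have hxy' : ((f x : Fin (c+1)) : ℕ) = ((f y : Fin (c+1)) : ℕ) := by rw [hxy]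
    rw [hX, Finset.mem_Icc] at hx hy
    omega
  set F : Finset ℕ → Finset (Fin (c + 1)) := fun s => s.image f with hF
  have hFcard : ∀ s ⊆ X, (F s).card = s.card := by
    intro s hs
    exact Finset.card_image_of_injOn (fun x hx y hy => hinj x (hs hx) y (hs hy))
  -- the EKR bound
  set 𝒜 : Finset (Finset (Fin (c + 1))) := ℳ.image F with h𝒜
  have h𝒜sized : (𝒜 : Set (Finset (Fin (c + 1)))).Sized k := by
    intro t ht
    simp only [h𝒜, Finset.coe_image, Set.mem_image, Finset.mem_coe] at ht
    obtain ⟨M, hMm, rfl⟩ := ht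
    rw [hFcard M (hM M hMm).1]
    exact (hM M hMm).2
  have h𝒜int : (𝒜 : Set (Finset (Fin (c + 1)))).Intersecting := by
    intro s hs t ht hdisj
    simp only [h𝒜, Finset.coe_image, Set.mem_image, Finset.mem_coe] at hs ht
    obtain ⟨M, hMm, rfl⟩ := hs
    obtain ⟨M', hMm', rfl⟩ := ht
    obtain ⟨x, hx⟩ := hint M hMm M' hMm'
    rw [Finset.mem_inter] at hx
    exact (Finset.disjoint_left.1 hdisj (Finset.mem_image_of_mem f hx.1))
      (Finset.mem_image_of_mem f hx.2)
  have hk2 : k ≤ (c + 1) / 2 := by omega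
  have hEKR : 𝒜.card ≤ c.choose (k - 1) := by
    have := Finset.erdos_ko_rado h𝒜int h𝒜sized hk2
    simpa using this
  have h𝒜card : 𝒜.card = ℳ.card := by
    apply Finset.card_image_of_injOn
    intro M hMm M' hMm' hFeq
    rw [Finset.mem_coe] at hMm hMm'
    ext x
    constructor
    · intro hx
      have : f x ∈ F M' := hFeq ▸ Finset.mem_image_of_mem f hx
      obtain ⟨y, hy, hxy⟩ := Finset.mem_image.1 this
      rwa [hinj y ((hM M' hMm').1 hy) x ((hM M hMm).1 hx) hxy] at hy
    · intro hx
      have : f x ∈ F M := hFeq ▸ Finset.mem_image_of_mem f hx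
      obtain ⟨y, hy, hxy⟩ := Finset.mem_image.1 this
      rwa [hinj y ((hM M hMm).1 hy) x ((hM M' hMm').1 hx) hxy] at hy
  have hNcard : 𝒩.card = ℳ.card := by
    apply Finset.card_image_of_injOn
    intro M hMm M' hMm' heq
    rw [Finset.mem_coe] at hMm hMm'
    have h1 := Finset.sdiff_sdiff_eq_self (hM M hMm).1
    have h2 := Finset.sdiff_sdiff_eq_self (hM M' hMm').1
    simp only at heq
    rw [← h1, ← h2, heq]
  set r : ℕ := n - 1 - k with hr
  set i : ℕ := r - (k - 1) with hi
  have hchoose : c.choose (r - i) = c.choose r := by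
    have h1 : r - i = k - 1 := by omega
    have h2 : r = c - (k - 1) := by omega
    rw [h1, h2]
    exact (Nat.choose_symm (by omega)).symm
  have hNle : 𝒩.card ≤ (Finset.powersetCard r (Finset.univ : Finset (Fin c))).card := by
    rw [Finset.card_powersetCard, Finset.card_univ, Fintype.card_fin]
    calc 𝒩.card = 𝒜.card := by rw [hNcard, h𝒜card]
      _ ≤ c.choose (k - 1) := hEKR
      _ = c.choose (r - i) := by rw [show r - i = k - 1 by omega]
      _ = c.choose r := hchoose
  obtain ⟨𝒟, h𝒟seg, h𝒟card⟩ := exists_isInitSeg c r 𝒩.card hNle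
  -- iterated LYM downstairs
  have h1 : 𝒟.card ≤ (∂^[i] 𝒟).card :=
    card_le_iterated_shadow 𝒟 h𝒟seg.1 (by omega) (by omega) hchoose
  -- move up
  set 𝒟' : Finset (Finset (Fin (c + 1))) := 𝒟.image (fun t => t.image Fin.castSucc) with h𝒟'
  have h𝒟'card : 𝒟'.card = 𝒟.card :=
    Finset.card_image_of_injective _ (Finset.image_injective (Fin.castSucc_injective c))
  have h2 : (∂^[i] 𝒟).card ≤ (∂^[i] 𝒟').card := by
    calc (∂^[i] 𝒟).card
        = ((∂^[i] 𝒟).image (fun t => t.image Fin.castSucc)).card :=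
          (Finset.card_image_of_injective _
            (Finset.image_injective (Fin.castSucc_injective c))).symm
      _ ≤ (∂^[i] 𝒟').card := Finset.card_le_card (image_shadow_iterate_subset 𝒟)
  -- Kruskal-Katona comparison with 𝒩' upstairs
  set 𝒩' : Finset (Finset (Fin (c + 1))) := 𝒩.image F with h𝒩'
  have h𝒩'sized : (𝒩' : Set (Finset (Fin (c + 1)))).Sized r := by
    intro t ht
    simp only [h𝒩', Finset.coe_image, Set.mem_image, Finset.mem_coe] at ht
    obtain ⟨N, hN, rfl⟩ := ht
    rw [hFcard N (hNsub N hN).1]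
    exact (hNsub N hN).2
  have h𝒩'card : 𝒩'.card = 𝒩.card := by
    apply Finset.card_image_of_injOn
    intro N hN N' hN' hFeq
    rw [Finset.mem_coe] at hN hN'
    ext x
    constructor
    · intro hx
      have : f x ∈ F N' := hFeq ▸ Finset.mem_image_of_mem f hx
      obtain ⟨y, hy, hxy⟩ := Finset.mem_image.1 this
      rwa [hinj y ((hNsub N' hN').1 hy) x ((hNsub N hN).1 hx) hxy] at hy
    · intro hx
      have : f x ∈ F N := hFeq ▸ Finset.mem_image_of_mem f hx
      obtain ⟨y, hy, hxy⟩ := Finset.mem_image.1 this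
      rwa [hinj y ((hNsub N hN).1 hy) x ((hNsub N' hN').1 hx) hxy] at hy
  have h3 : (∂^[i] 𝒟').card ≤ (∂^[i] 𝒩').card := by
    apply Finset.iterated_kk h𝒩'sized
    · rw [h𝒟'card, h𝒟card, h𝒩'card]
    · exact isInitSeg_image_castSucc h𝒟seg
  -- back down to ℕ
  have h4 : (∂^[i] 𝒩').card ≤ (mShadow (k - 1) 𝒩).card := by
    have hsub : ∂^[i] 𝒩' ⊆ (mShadow (k - 1) 𝒩).image F := by
      intro B hB
      rw [Finset.mem_shadow_iterate_iff_exists_sdiff] at hB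
      obtain ⟨A, hA, hBA, hcd⟩ := hB
      obtain ⟨N₀, hN₀, rfl⟩ := Finset.mem_image.1 hA
      obtain ⟨B₀, hB₀sub, rfl⟩ := Finset.subset_image_iff.1 hBA
      have hAcard : (F N₀).card = r := h𝒩'sized (by
        rw [Finset.mem_coe]; exact Finset.mem_image_of_mem F hN₀)
      have hBcard : (B₀.image f).card = k - 1 := by
        have hle : (B₀.image f).card ≤ (F N₀).card :=
          Finset.card_le_card hBA
        have := Finset.card_sdiff_of_subset hBA
        omega
      have hB₀card : B₀.card = k - 1 := by
        rw [← hBcard]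
        exact (Finset.card_image_of_injOn
          (fun x hx y hy => hinj x ((hNsub N₀ hN₀).1 (hB₀sub hx)) y
            ((hNsub N₀ hN₀).1 (hB₀sub hy)))).symm
      refine Finset.mem_image_of_mem F ?_
      rw [mem_mShadow]
      exact ⟨N₀, hN₀, hB₀sub, hB₀card⟩
    calc (∂^[i] 𝒩').card ≤ ((mShadow (k - 1) 𝒩).image F).card := Finset.card_le_card hsub
      _ ≤ (mShadow (k - 1) 𝒩).card := Finset.card_image_le
  calc 𝒩.card = 𝒟.card := h𝒟card.symm
    _ ≤ (∂^[i] 𝒟).card := h1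
    _ ≤ (∂^[i] 𝒟').card := h2
    _ ≤ (∂^[i] 𝒩').card := h3
    _ ≤ (mShadow (k - 1) 𝒩).card := h4
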